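/- Let m, l ≥ 3 with l odd, and let f: C_m → C_l be a graph homomorphism with degree deg f (the integer such that f_E(O_m) = deg f · O_l). Then |deg f| ≤ m/l. -/
import Mathlib


/-- The oriented edge `[u,v]` as an edge chain: the antisymmetrized generator. -/
noncomputable def oe {V : Type*} [DecidableEq V] (u v : V) : V × V →₀ ℤ :=
  Finsupp.single (u, v) 1 - Finsupp.single (v, u) 1

/-- The map on edge chains induced by a map on vertices. -/
noncomputable def fE {V W : Type*} [DecidableEq V] [DecidableEq W] (f : V → W) :
    (V × V →₀ ℤ) →+ (W × W →₀ ℤ) :=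
  Finsupp.mapDomain.addMonoidHom (Prod.map f f)

/-- Adjacency in the `m`-cycle on vertex set `ZMod m`. -/
def CycAdj (m : ℕ) (u v : ZMod m) : Prop := v = u + 1 ∨ v = u - 1

/-- The oriented cycle `O_m = [0,1] + [1,2] + ⋯ + [m-1,0]` as an edge chain. -/
noncomputable def cycO (m : ℕ) : ZMod m × ZMod m →₀ ℤ :=
  ∑ i ∈ Finset.range m, oe (i : ZMod m) ((i : ZMod m) + 1)

/-- Weight function on oriented edges of `C_l`. -/
noncomputable def gw (l : ℕ) : ZMod l × ZMod l → ℤ := fun p =>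
  (if p.2 = p.1 + 1 then 1 else 0) - (if p.2 = p.1 - 1 then 1 else 0)

lemma lc_oe {l : ℕ} (w : ZMod l × ZMod l → ℤ) (u v : ZMod l) :
    Finsupp.linearCombination ℤ w (oe u v) = w (u, v) - w (v, u) := by
  simp [oe]

lemma two_ne (l : ℕ) (hl : 3 ≤ l) : (2 : ZMod l) ≠ 0 := by
  intro h
  have h2 : ((2 : ℕ) : ZMod l) = 0 := by rw [Nat.cast_ofNat]; exact h
  rw [ZMod.natCast_eq_zero_iff] at h2
  exact absurd (Nat.le_of_dvd (by norm_num) h2) (by omega)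

lemma gw_plus (l : ℕ) (hl : 3 ≤ l) (u : ZMod l) :
    gw l (u, u + 1) - gw l (u + 1, u) = 2 := by
  have h2 := two_ne l hl
  have hne : u + 1 ≠ u - 1 := fun hx => h2 (by linear_combination hx)
  have e1 : u ≠ u + 1 + 1 := fun hx => h2 (by linear_combination -hx)
  have e2 : u = u + 1 - 1 := by ring
  simp only [gw, if_pos rfl, if_neg hne, if_neg e1, if_pos e2]
  norm_num

lemma gw_minus (l : ℕ) (hl : 3 ≤ l) (u : ZMod l) :
    gw l (u, u - 1) - gw l (u - 1, u) = -2 := by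
  have h2 := two_ne l hl
  have hne : u - 1 ≠ u + 1 := fun hx => h2 (by linear_combination -hx)
  have e1 : u ≠ u - 1 - 1 := fun hx => h2 (by linear_combination hx)
  have e2 : u = u - 1 + 1 := by ring
  simp only [gw, if_neg hne, if_pos rfl, if_pos e2, if_neg e1]
  norm_num

lemma gw_oe (l : ℕ) (hl : 3 ≤ l) (u v : ZMod l) (h : CycAdj l u v) :
    gw l (u, v) - gw l (v, u) = 2 ∨ gw l (u, v) - gw l (v, u) = -2 := by
  rcases h with h | h
  · exact Or.inl (h ▸ gw_plus l hl u)
  · exact Or.inr (h ▸ gw_minus l hl u)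

/-- If `f : C_m → C_l` is a graph homomorphism (`m, l ≥ 3`, `l` odd) with degree `d`
(i.e. `f_E(O_m) = d • O_l`), then `|d| ≤ m / l`, i.e. `|d| * l ≤ m`. -/
theorem degree_le (m l : ℕ) (hm : 3 ≤ m) (hl : 3 ≤ l) (hlodd : Odd l)
    (f : ZMod m → ZMod l) (hf : ∀ u v, CycAdj m u v → CycAdj l (f u) (f v))
    (d : ℤ) (hd : fE f (cycO m) = d • cycO l) :
    d.natAbs * l ≤ m := by
  set φ := Finsupp.linearCombination ℤ (gw l) with hφ
  have hLR := congrArg φ hd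
  -- RHS : φ (d • cycO l) = d * (2 * l)
  have hR : φ (d • cycO l) = d * (2 * l) := by
    rw [map_smul]
    have hO : φ (cycO l) = 2 * l := by
      rw [cycO, map_sum]
      have h1 : ∀ i ∈ Finset.range l, φ (oe (i : ZMod l) ((i : ZMod l) + 1)) = 2 := by
        intro i _
        rw [hφ, lc_oe]
        exact gw_plus l hl _
      rw [Finset.sum_congr rfl h1, Finset.sum_const, Finset.card_range]
      push_cast
      ring
    rw [hO, smul_eq_mul]
  -- LHS : φ (fE f (cycO m)) = ∑ e i with e i = ±2
  have hL : φ (fE f (cycO m)) =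
      ∑ i ∈ Finset.range m,
        (gw l (f (i : ZMod m), f ((i : ZMod m) + 1)) - gw l (f ((i : ZMod m) + 1), f (i : ZMod m))) := by
    rw [fE, Finsupp.mapDomain.addMonoidHom_apply, hφ,
      Finsupp.linearCombination_mapDomain, cycO, map_sum]
    refine Finset.sum_congr rfl fun i _ => ?_
    rw [lc_oe]
    rfl
  rw [hL, hR] at hLR
  have hbound : |(d * (2 * l) : ℤ)| ≤ 2 * m := by
    rw [← hLR]
    calc |∑ i ∈ Finset.range m, (gw l (f (i : ZMod m), f ((i : ZMod m) + 1)) -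
          gw l (f ((i : ZMod m) + 1), f (i : ZMod m)))|
        ≤ ∑ i ∈ Finset.range m, |(gw l (f (i : ZMod m), f ((i : ZMod m) + 1)) -
          gw l (f ((i : ZMod m) + 1), f (i : ZMod m)))| := Finset.abs_sum_le_sum_abs _ _
      _ ≤ ∑ i ∈ Finset.range m, (2 : ℤ) := by
          refine Finset.sum_le_sum fun i _ => ?_
          rcases gw_oe l hl (f (i : ZMod m)) (f ((i : ZMod m) + 1))
            (hf _ _ (Or.inl rfl)) with h | h <;> rw [h] <;> norm_num
      _ = 2 * m := by simp [mul_comm]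
  have habs : (d.natAbs : ℤ) * (2 * l) ≤ 2 * m := by
    calc (d.natAbs : ℤ) * (2 * l) = |d| * |(2 * l : ℤ)| := by
          rw [Int.abs_eq_natAbs d, abs_of_nonneg (by positivity : (0:ℤ) ≤ 2 * l)]
      _ = |d * (2 * l)| := (abs_mul _ _).symm
      _ ≤ 2 * m := hbound
  have hfin : (d.natAbs : ℤ) * l ≤ m := by linarith
  exact_mod_cast hfin
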